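/- The paper's Lemma computing the left differential of F_ξ(g) = ⟨ξ, log g⟩, in its algebraic form: let A be a unital Banach algebra over ℝ, and let x, a ∈ A with ‖ad(x)‖ < 2π (operator norm of ad(x)(b) = xb − bx). Let ã := Σ_{m≥0} (B_m/m!) · ad(x)^m(a), where B_m are the Bernoulli numbers with exponential generating function z/(e^z − 1) (so B_0 = 1, B_1 = −1/2); the series converges since ‖ad(x)‖ < 2π. Then a · exp(x) = Σ_{n≥1} (1/n!) · Σ_{k=0}^{n−1} x^k ã x^{n−1−k}. (In the paper's notation, ã = f(−½ ad x)(a) with f(z) = z e^z / sinh z, and ã is the derivative at ε = 0 of log(exp(εa)·exp(x)).) -/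

import Mathlib

open scoped Real
open Finset

/-- `ad(x) : A → A`, `b ↦ xb − bx`, as a bounded linear operator. -/
noncomputable def adOp (A : Type*) [NormedRing A] [NormedAlgebra ℝ A] (x : A) : A →L[ℝ] A :=
  ContinuousLinearMap.mul ℝ A x - (ContinuousLinearMap.mul ℝ A).flip x


section Aux

lemma sum_pow_mul_eq_sum_choose {B : Type*} [Ring B] (u v : B) (h : Commute u v) (d : ℕ) :
    ∑ k ∈ range (d+1), u ^ k * v ^ (d - k)
      = ∑ m ∈ range (d+1), ((d+1).choose (m+1)) • ((u - v) ^ m * v ^ (d - m)) := by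
  induction d with
  | zero => simp
  | succ d ih =>
    have hw : Commute (u - v) v := h.sub_left (Commute.refl v)
    have hL : ∑ k ∈ range (d+2), u ^ k * v ^ (d+1-k)
        = v * (∑ k ∈ range (d+1), u ^ k * v ^ (d-k)) + u ^ (d+1) := by
      rw [sum_range_succ, Finset.mul_sum]
      congr 1
      · refine Finset.sum_congr rfl fun k hk => ?_
        have hk' : k ≤ d := Nat.lt_succ_iff.mp (mem_range.mp hk)
        have h1 : d + 1 - k = (d - k) + 1 := by omega
        rw [h1, pow_succ', ← mul_assoc, (h.pow_left k).eq, mul_assoc]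
      · simp
    have hR : ∑ m ∈ range (d+2), ((d+2).choose (m+1)) • ((u - v) ^ m * v ^ (d+1-m))
        = u ^ (d+1) + v * (∑ m ∈ range (d+1), ((d+1).choose (m+1)) • ((u - v) ^ m * v ^ (d-m))) := by
      have pasc : ∀ m, (d+2).choose (m+1) = (d+1).choose m + (d+1).choose (m+1) := fun m =>
        Nat.choose_succ_succ (d+1) m
      calc ∑ m ∈ range (d+2), ((d+2).choose (m+1)) • ((u - v) ^ m * v ^ (d+1-m))
          = ∑ m ∈ range (d+2), (((d+1).choose m) • ((u - v) ^ m * v ^ (d+1-m))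
              + ((d+1).choose (m+1)) • ((u - v) ^ m * v ^ (d+1-m))) := by
            refine Finset.sum_congr rfl fun m _ => ?_
            rw [pasc, add_smul]
        _ = (∑ m ∈ range (d+2), ((d+1).choose m) • ((u - v) ^ m * v ^ (d+1-m)))
              + ∑ m ∈ range (d+2), ((d+1).choose (m+1)) • ((u - v) ^ m * v ^ (d+1-m)) :=
            Finset.sum_add_distrib
        _ = u ^ (d+1) + v * (∑ m ∈ range (d+1), ((d+1).choose (m+1)) • ((u - v) ^ m * v ^ (d-m))) := by
            congr 1
            · have hb := hw.add_pow (d+1)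
              rw [sub_add_cancel] at hb
              rw [hb]
              refine Finset.sum_congr rfl fun m _ => ?_
              rw [nsmul_eq_mul, ← (Nat.cast_commute ((d+1).choose m) ((u-v)^m * v^(d+1-m))).eq]
            · rw [sum_range_succ, Nat.choose_succ_self, zero_smul, add_zero, Finset.mul_sum]
              refine Finset.sum_congr rfl fun m hm => ?_
              have hm' : m ≤ d := Nat.lt_succ_iff.mp (mem_range.mp hm)
              have h1 : d + 1 - m = (d - m) + 1 := by omega
              rw [h1, pow_succ', ← mul_assoc, (hw.pow_left m).eq, mul_assoc, mul_smul_comm]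
    rw [hL, hR, ih, add_comm]

lemma commute_tsum_tsum {B : Type*} [NormedRing B] [CompleteSpace B] {f g : ℕ → B}
    (hf : Summable f) (hg : Summable g) (h : ∀ m n, Commute (f m) (g n)) :
    Commute (∑' n, f n) (∑' n, g n) := by
  have h1 : ∀ n, Commute (∑' m, f m) (g n) := fun n => by
    unfold Commute SemiconjBy
    rw [← hf.tsum_mul_right, ← hf.tsum_mul_left]
    exact tsum_congr fun m => (h m n).eq
  unfold Commute SemiconjBy
  rw [← hg.tsum_mul_right, ← hg.tsum_mul_left]
  exact tsum_congr fun n => (h1 n).eq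

lemma zeta_even_le_two {k : ℕ} (hk : k ≠ 0) :
    (∑' n : ℕ, 1 / (n : ℝ) ^ (2 * k)) ≤ 2 := by
  have h2 := hasSum_zeta_two
  have hle : (∑' n : ℕ, 1 / (n : ℝ) ^ (2 * k)) ≤ ∑' n : ℕ, 1 / (n : ℝ) ^ 2 := by
    refine Summable.tsum_le_tsum (fun n => ?_) (hasSum_zeta_nat hk).summable h2.summable
    rcases Nat.eq_zero_or_pos n with hn | hn
    · subst hn
      rw [Nat.cast_zero, zero_pow (by omega : 2 * k ≠ 0), zero_pow (two_ne_zero), div_zero]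
    · have h1 : (1:ℝ) ≤ (n:ℝ) := by exact_mod_cast hn
      have : (n:ℝ) ^ 2 ≤ (n:ℝ) ^ (2*k) := pow_le_pow_right₀ h1 (by omega)
      exact one_div_le_one_div_of_le (by positivity) this
  have hpi : π ^ 2 / 6 ≤ 2 := by nlinarith [Real.pi_lt_d2, Real.pi_gt_three]
  calc _ ≤ ∑' n : ℕ, 1 / (n : ℝ) ^ 2 := hle
    _ = π ^ 2 / 6 := h2.tsum_eq
    _ ≤ 2 := hpi

lemma bernoulli_div_factorial_le (l : ℕ) :
    |((bernoulli l : ℚ) : ℝ)| / (l.factorial : ℝ) ≤ 4 / (2 * π) ^ l := by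
  have hpi : (0:ℝ) < 2 * π := by positivity
  rcases Nat.even_or_odd l with ⟨k, hk⟩ | hodd
  · rw [show l = 2 * k by omega]
    rcases Nat.eq_zero_or_pos k with h0 | h0
    · subst h0; norm_num [bernoulli]
    · have hk : k ≠ 0 := by omega
      have hS := hasSum_zeta_nat hk
      set S : ℝ := ∑' n : ℕ, 1 / (n : ℝ) ^ (2 * k) with hSdef
      have hSeq : S = (-1 : ℝ) ^ (k + 1) * 2 ^ (2 * k - 1) * π ^ (2 * k) *
          ((bernoulli (2 * k) : ℚ) : ℝ) / (2 * k).factorial := hS.tsum_eq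
      have hS0 : 0 ≤ S := tsum_nonneg fun n => by positivity
      have hS2 : S ≤ 2 := zeta_even_le_two hk
      have hfac : (0:ℝ) < ((2*k).factorial : ℝ) := by positivity
      have h2pow : (2:ℝ) ^ (2 * k - 1) * π ^ (2 * k) = (2 * π) ^ (2 * k) / 2 := by
        rw [mul_pow]
        have : (2:ℝ) ^ (2 * k) = 2 ^ (2 * k - 1) * 2 := by
          rw [← pow_succ]
          congr 1
          omega
        rw [this]; ring
      have habs : |((bernoulli (2*k) : ℚ) : ℝ)| / ((2*k).factorial : ℝ)
          = 2 * S / (2 * π) ^ (2 * k) := by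
        have h := abs_eq_abs.mpr (Or.inl hSeq)
        rw [abs_of_nonneg hS0] at h
        rw [abs_div, abs_mul, abs_mul, abs_mul, abs_pow, abs_neg, abs_one, one_pow, one_mul,
          abs_pow, abs_pow, abs_of_pos (by norm_num : (0:ℝ) < 2),
          abs_of_pos Real.pi_pos, abs_of_pos hfac, h2pow] at h
        rw [h]
        field_simp
      rw [habs]
      gcongr
      linarith
  · rcases Nat.lt_or_ge l 2 with h2 | h2
    · interval_cases l
      · norm_num [bernoulli]
      · norm_num [bernoulli_one]
        rw [le_div_iff₀ hpi]
        nlinarith [Real.pi_lt_d2]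
    · have hz : bernoulli l = 0 := by
        rw [bernoulli_eq_bernoulli'_of_ne_one (by omega)]
        exact bernoulli'_eq_zero_of_odd hodd (by omega)
      rw [hz]
      simp only [Rat.cast_zero, abs_zero, zero_div]
      positivity

end Aux

section Ops
variable {A : Type*} [NormedRing A] [NormedAlgebra ℝ A] (x : A)

noncomputable def Lop : A →L[ℝ] A := ContinuousLinearMap.mul ℝ A x
noncomputable def Rop : A →L[ℝ] A := (ContinuousLinearMap.mul ℝ A).flip x

lemma adOp_eq : adOp A x = Lop x - Rop x := rfl

lemma Lop_apply (b : A) : Lop x b = x * b := rfl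
lemma Rop_apply (b : A) : Rop x b = b * x := rfl

lemma Lop_pow_apply (k : ℕ) (b : A) : (Lop x ^ k) b = x ^ k * b := by
  induction k with
  | zero => simp
  | succ k ih => rw [pow_succ', ContinuousLinearMap.mul_apply, Lop_apply, ih, pow_succ', mul_assoc]

lemma Rop_pow_apply (k : ℕ) (b : A) : (Rop x ^ k) b = b * x ^ k := by
  induction k with
  | zero => simp
  | succ k ih => rw [pow_succ', ContinuousLinearMap.mul_apply, ih, Rop_apply, pow_succ, mul_assoc]

lemma LR_commute : Commute (Lop x) (Rop x) := by
  ext b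
  simp only [ContinuousLinearMap.mul_apply, Lop_apply, Rop_apply, mul_assoc]

lemma norm_Lop_le : ‖Lop x‖ ≤ ‖x‖ := ContinuousLinearMap.opNorm_mul_apply_le ℝ A x

lemma norm_Rop_le : ‖Rop x‖ ≤ ‖x‖ := by
  refine ContinuousLinearMap.opNorm_le_bound _ (norm_nonneg x) fun b => ?_
  rw [Rop_apply, mul_comm ‖x‖]
  exact norm_mul_le b x

lemma norm_op_pow_le (S : A →L[ℝ] A) {c : ℝ} (hc : ‖S‖ ≤ c) (hc0 : 0 ≤ c) (k : ℕ) :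
    ‖S ^ k‖ ≤ c ^ k := by
  induction k with
  | zero => rw [pow_zero, pow_zero]; exact ContinuousLinearMap.norm_id_le
  | succ k ih =>
    rw [pow_succ, pow_succ]
    exact le_trans (norm_mul_le _ _) (mul_le_mul ih hc (norm_nonneg _) (by positivity))

lemma clm_smul_mul_smul {A : Type*} [NormedRing A] [NormedAlgebra ℝ A]
    (α β : ℝ) (f g : A →L[ℝ] A) :
    (α • f) * (β • g) = (α * β) • (f * g) := by
  ext b
  simp only [ContinuousLinearMap.mul_apply, ContinuousLinearMap.smul_apply, map_smul,
    smul_smul]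
  rw [mul_comm]

lemma clm_commute_smul {A : Type*} [NormedRing A] [NormedAlgebra ℝ A]
    (α β : ℝ) {f g : A →L[ℝ] A} (h : Commute f g) : Commute (α • f) (β • g) := by
  unfold Commute SemiconjBy
  rw [clm_smul_mul_smul, clm_smul_mul_smul, h.eq, mul_comm α β]

end Ops

set_option synthInstance.maxHeartbeats 1000000 in
/-- left-differential lemma, algebraic form.  If `‖ad(x)‖ < 2π` then the
series `ã := Σ_{m≥0} (B_m/m!)·ad(x)^m(a)` (Bernoulli numbers, `B_1 = −1/2`) converges,
and `a · exp(x) = Σ_{n≥1} (1/n!) Σ_{k=0}^{n−1} x^k ã x^{n−1−k}`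
(the right-hand series indexed by `m = n − 1`). -/
theorem left_differential_lemma {A : Type*} [NormedRing A] [NormedAlgebra ℝ A]
    [CompleteSpace A] (x a : A) (hx : ‖adOp A x‖ < 2 * π) :
    Summable (fun l : ℕ => (((bernoulli l : ℚ) : ℝ) / (l.factorial : ℝ)) • (adOp A x ^ l) a) ∧
    a * (∑' n : ℕ, ((n.factorial : ℝ))⁻¹ • x ^ n)
      = ∑' m : ℕ, (((m + 1).factorial : ℝ))⁻¹ •
          ∑ k ∈ Finset.range (m + 1),
            x ^ k * (∑' l : ℕ, (((bernoulli l : ℚ) : ℝ) / (l.factorial : ℝ)) •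
              (adOp A x ^ l) a) * x ^ (m - k) := by
  set L : A →L[ℝ] A := Lop x with hLdef
  set R : A →L[ℝ] A := Rop x with hRdef
  set T : A →L[ℝ] A := adOp A x with hTdef
  have hT : T = L - R := adOp_eq x
  have hcomm : Commute L R := LR_commute x
  -- norm-summability of the Bernoulli series
  have hFn : Summable fun l : ℕ =>
      ‖(((bernoulli l : ℚ) : ℝ) / (l.factorial : ℝ)) • T ^ l‖ := by
    have hr0 : (0:ℝ) ≤ ‖T‖ / (2 * π) := by positivity
    have hr1 : ‖T‖ / (2 * π) < 1 := (div_lt_one (by positivity)).mpr hx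
    refine Summable.of_nonneg_of_le (fun l => norm_nonneg _)
      (fun l => ?_) ((summable_geometric_of_lt_one hr0 hr1).mul_left 4)
    rw [norm_smul (((bernoulli l : ℚ) : ℝ) / (l.factorial : ℝ)) (T ^ l), Real.norm_eq_abs]
    have h1 : |((bernoulli l : ℚ) : ℝ) / (l.factorial : ℝ)| ≤ 4 / (2 * π) ^ l := by
      rw [abs_div, Nat.abs_cast]
      exact bernoulli_div_factorial_le l
    have h2 : ‖T ^ l‖ ≤ ‖T‖ ^ l := norm_op_pow_le T le_rfl (norm_nonneg T) l
    calc |((bernoulli l : ℚ) : ℝ) / (l.factorial : ℝ)| * ‖T ^ l‖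
        ≤ (4 / (2 * π) ^ l) * ‖T‖ ^ l :=
          mul_le_mul h1 h2 (norm_nonneg _) (by positivity)
      _ = 4 * (‖T‖ / (2 * π)) ^ l := by rw [div_pow]; ring
  have hFsum : Summable fun l : ℕ =>
      (((bernoulli l : ℚ) : ℝ) / (l.factorial : ℝ)) • T ^ l := hFn.of_norm
  -- norm-summability of g(T) = Σ T^m/(m+1)!
  have hgn : Summable fun m : ℕ => ‖(((m+1).factorial : ℝ))⁻¹ • T ^ m‖ := by
    refine Summable.of_nonneg_of_le (fun m => norm_nonneg _) (fun m => ?_)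
      (Real.summable_pow_div_factorial ‖T‖)
    rw [norm_smul ((((m+1).factorial : ℝ))⁻¹) (T ^ m), Real.norm_eq_abs,
      abs_of_nonneg (by positivity)]
    have h1 : (((m+1).factorial : ℝ))⁻¹ ≤ ((m.factorial : ℝ))⁻¹ := by
      apply inv_anti₀ (by positivity)
      exact_mod_cast Nat.factorial_le (Nat.le_succ m)
    have h2 : ‖T ^ m‖ ≤ ‖T‖ ^ m := norm_op_pow_le T le_rfl (norm_nonneg T) m
    calc (((m+1).factorial : ℝ))⁻¹ * ‖T ^ m‖ ≤ ((m.factorial : ℝ))⁻¹ * ‖T‖ ^ m :=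
          mul_le_mul h1 h2 (norm_nonneg _) (by positivity)
      _ = ‖T‖ ^ m / m.factorial := by rw [div_eq_inv_mul]
  have hgsum : Summable fun m : ℕ => (((m+1).factorial : ℝ))⁻¹ • T ^ m := hgn.of_norm
  -- exp series of R
  have hRn : Summable fun n : ℕ => ‖((n.factorial : ℝ))⁻¹ • R ^ n‖ :=
    NormedSpace.norm_expSeries_summable' (𝕂 := ℝ) R
  have hRsum : Summable fun n : ℕ => ((n.factorial : ℝ))⁻¹ • R ^ n := hRn.of_norm
  -- the G series
  have hGn : Summable fun m : ℕ =>
      ‖(((m+1).factorial : ℝ))⁻¹ • ∑ k ∈ range (m+1), L ^ k * R ^ (m-k)‖ := by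
    refine Summable.of_nonneg_of_le (fun m => norm_nonneg _) (fun m => ?_)
      (Real.summable_pow_div_factorial ‖x‖)
    rw [norm_smul ((((m+1).factorial : ℝ))⁻¹) (∑ k ∈ range (m+1), L ^ k * R ^ (m-k)),
      Real.norm_eq_abs, abs_of_nonneg (by positivity)]
    have h1 : ‖∑ k ∈ range (m+1), L ^ k * R ^ (m-k)‖ ≤ (m+1) * ‖x‖ ^ m := by
      refine le_trans (norm_sum_le _ _) ?_
      have hb : ∀ k ∈ range (m+1), ‖L ^ k * R ^ (m-k)‖ ≤ ‖x‖ ^ m := by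
        intro k hk
        have hk' : k ≤ m := Nat.lt_succ_iff.mp (mem_range.mp hk)
        calc ‖L ^ k * R ^ (m-k)‖ ≤ ‖L ^ k‖ * ‖R ^ (m-k)‖ := norm_mul_le _ _
          _ ≤ ‖x‖ ^ k * ‖x‖ ^ (m-k) :=
              mul_le_mul (norm_op_pow_le _ (norm_Lop_le x) (norm_nonneg x) k)
                (norm_op_pow_le _ (norm_Rop_le x) (norm_nonneg x) (m-k))
                (norm_nonneg _) (by positivity)
          _ = ‖x‖ ^ m := by rw [← pow_add]; congr 1; omega
      have := Finset.sum_le_card_nsmul (range (m+1)) (fun k => ‖L ^ k * R ^ (m-k)‖)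
        (‖x‖ ^ m) hb
      simpa [Finset.card_range, nsmul_eq_mul] using this
    calc (((m+1).factorial : ℝ))⁻¹ * ‖∑ k ∈ range (m+1), L ^ k * R ^ (m-k)‖
        ≤ (((m+1).factorial : ℝ))⁻¹ * ((m+1) * ‖x‖ ^ m) := by
          exact mul_le_mul_of_nonneg_left h1 (by positivity)
      _ = ‖x‖ ^ m / m.factorial := by
          rw [Nat.factorial_succ]
          push_cast
          have hm0 : (m.factorial : ℝ) ≠ 0 := by positivity
          field_simp
  have hGsum : Summable fun m : ℕ =>
      (((m+1).factorial : ℝ))⁻¹ • ∑ k ∈ range (m+1), L ^ k * R ^ (m-k) := hGn.of_norm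
  -- key identity 6 : g(T) * exp R = G
  have key6 : (∑' m : ℕ, (((m+1).factorial : ℝ))⁻¹ • T ^ m)
        * (∑' n : ℕ, ((n.factorial : ℝ))⁻¹ • R ^ n)
      = ∑' m : ℕ, (((m+1).factorial : ℝ))⁻¹ • ∑ k ∈ range (m+1), L ^ k * R ^ (m-k) := by
    rw [tsum_mul_tsum_eq_tsum_sum_antidiagonal_of_summable_norm hgn hRn]
    refine tsum_congr fun d => ?_
    rw [Finset.Nat.sum_antidiagonal_eq_sum_range_succ_mk]
    rw [sum_pow_mul_eq_sum_choose L R hcomm d, Finset.smul_sum]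
    refine Finset.sum_congr rfl fun m hm => ?_
    have hm' : m ≤ d := Nat.lt_succ_iff.mp (mem_range.mp hm)
    rw [clm_smul_mul_smul, ← hT,
      ← Nat.cast_smul_eq_nsmul ℝ ((d+1).choose (m+1)), smul_smul]
    congr 1
    rw [Nat.cast_choose ℝ (by omega : m+1 ≤ d+1)]
    rw [show (d+1) - (m+1) = d - m by omega]
    have f1 : ((m+1).factorial : ℝ) ≠ 0 := by positivity
    have f2 : ((d-m).factorial : ℝ) ≠ 0 := by positivity
    have f3 : ((d+1).factorial : ℝ) ≠ 0 := by positivity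
    field_simp
  -- key identity 5 : g(T) * f(T) = 1
  have key5 : (∑' m : ℕ, (((m+1).factorial : ℝ))⁻¹ • T ^ m)
        * (∑' l : ℕ, (((bernoulli l : ℚ) : ℝ) / (l.factorial : ℝ)) • T ^ l) = 1 := by
    rw [tsum_mul_tsum_eq_tsum_sum_antidiagonal_of_summable_norm hgn hFn]
    rw [tsum_eq_single 0 ?_]
    · norm_num [Nat.factorial]
    · intro d hd
      rw [Finset.Nat.sum_antidiagonal_eq_sum_range_succ_mk]
      have hterm : ∀ k ∈ range (d+1),
          ((((k+1).factorial : ℝ))⁻¹ • T ^ k)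
              * ((((bernoulli (d-k) : ℚ) : ℝ) / ((d-k).factorial : ℝ)) • T ^ (d-k))
          = ((((k+1).factorial : ℝ))⁻¹ * (((bernoulli (d-k) : ℚ) : ℝ) / ((d-k).factorial : ℝ)))
              • T ^ d := by
        intro k hk
        have hk' : k ≤ d := Nat.lt_succ_iff.mp (mem_range.mp hk)
        rw [clm_smul_mul_smul, ← pow_add, Nat.add_sub_cancel' hk']
      rw [Finset.sum_congr rfl hterm, ← Finset.sum_smul]
      convert zero_smul ℝ (T ^ d) using 2
      rw [← Finset.sum_range_reflect]
      have hterm2 : ∀ j ∈ range (d+1),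
          ((((d + 1 - 1 - j + 1).factorial : ℝ))⁻¹
              * (((bernoulli (d - (d + 1 - 1 - j)) : ℚ) : ℝ) / ((d - (d + 1 - 1 - j)).factorial : ℝ)))
          = ((d+1).factorial : ℝ)⁻¹ * ((((d+1).choose j : ℚ) * bernoulli j : ℚ) : ℝ) := by
        intro j hj
        have hj' : j ≤ d := Nat.lt_succ_iff.mp (mem_range.mp hj)
        rw [show d + 1 - 1 - j = d - j by omega, show d - (d - j) = j by omega]
        push_cast
        rw [Nat.cast_choose ℝ (by omega : j ≤ d+1), show (d+1) - j = d - j + 1 by omega]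
        have f1 : ((j).factorial : ℝ) ≠ 0 := by positivity
        have f2 : ((d-j+1).factorial : ℝ) ≠ 0 := by positivity
        have f3 : ((d+1).factorial : ℝ) ≠ 0 := by positivity
        field_simp
      rw [Finset.sum_congr rfl hterm2, ← Finset.mul_sum]
      have : (∑ j ∈ range (d+1), ((((d+1).choose j : ℚ) * bernoulli j : ℚ) : ℝ))
          = (((∑ j ∈ range (d+1), ((d+1).choose j : ℚ) * bernoulli j) : ℚ) : ℝ) := by
        push_cast
        rfl
      rw [this, sum_bernoulli]
      have hd1 : d + 1 ≠ 1 := by omega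
      rw [if_neg hd1]
      norm_num
  -- commutation
  have hTR : Commute T R := by rw [hT]; exact hcomm.sub_left (Commute.refl R)
  have hFR : Commute (∑' l : ℕ, (((bernoulli l : ℚ) : ℝ) / (l.factorial : ℝ)) • T ^ l)
      (∑' n : ℕ, ((n.factorial : ℝ))⁻¹ • R ^ n) :=
    commute_tsum_tsum hFsum hRsum fun m n =>
      clm_commute_smul _ _ (hTR.pow_pow m n)
  -- main operator identity : G * F = exp R
  have main_op : (∑' m : ℕ, (((m+1).factorial : ℝ))⁻¹ • ∑ k ∈ range (m+1), L ^ k * R ^ (m-k))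
        * (∑' l : ℕ, (((bernoulli l : ℚ) : ℝ) / (l.factorial : ℝ)) • T ^ l)
      = ∑' n : ℕ, ((n.factorial : ℝ))⁻¹ • R ^ n := by
    rw [← key6, mul_assoc, ← hFR.eq, ← mul_assoc, key5, one_mul]
  -- evaluation
  have happly : ∀ (S : ℕ → (A →L[ℝ] A)), Summable S → ∀ b : A, (∑' n, S n) b = ∑' n, S n b := by
    intro S hS b
    have := ContinuousLinearMap.map_tsum (ContinuousLinearMap.apply ℝ A b) hS
    simpa using this
  constructor
  · have hs := hFsum.mapL (ContinuousLinearMap.apply ℝ A a)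
    simpa using hs
  · set ta : A := ∑' l : ℕ, (((bernoulli l : ℚ) : ℝ) / (l.factorial : ℝ)) • (T ^ l) a with htadef
    have hta2 : (∑' l : ℕ, (((bernoulli l : ℚ) : ℝ) / (l.factorial : ℝ)) • T ^ l) a = ta := by
      rw [happly _ hFsum a, htadef]
      exact tsum_congr fun l => by simp
    calc a * (∑' n : ℕ, ((n.factorial : ℝ))⁻¹ • x ^ n)
        = ∑' n : ℕ, a * (((n.factorial : ℝ))⁻¹ • x ^ n) :=
          ((NormedSpace.expSeries_summable' (𝕂 := ℝ) x).tsum_mul_left a).symm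
      _ = ∑' n : ℕ, (((n.factorial : ℝ))⁻¹ • R ^ n) a := by
          refine tsum_congr fun n => ?_
          rw [mul_smul_comm, ContinuousLinearMap.smul_apply, hRdef, Rop_pow_apply]
      _ = (∑' n : ℕ, ((n.factorial : ℝ))⁻¹ • R ^ n) a := (happly _ hRsum a).symm
      _ = ((∑' m : ℕ, (((m+1).factorial : ℝ))⁻¹ • ∑ k ∈ range (m+1), L ^ k * R ^ (m-k))
            * (∑' l : ℕ, (((bernoulli l : ℚ) : ℝ) / (l.factorial : ℝ)) • T ^ l)) a := by
          rw [main_op]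
      _ = (∑' m : ℕ, (((m+1).factorial : ℝ))⁻¹ • ∑ k ∈ range (m+1), L ^ k * R ^ (m-k)) ta := by
          rw [ContinuousLinearMap.mul_apply, hta2]
      _ = ∑' m : ℕ, ((((m+1).factorial : ℝ))⁻¹ • ∑ k ∈ range (m+1), L ^ k * R ^ (m-k)) ta :=
          happly _ hGsum ta
      _ = ∑' m : ℕ, (((m + 1).factorial : ℝ))⁻¹ •
            ∑ k ∈ Finset.range (m + 1), x ^ k * ta * x ^ (m - k) := by
          refine tsum_congr fun m => ?_
          rw [ContinuousLinearMap.smul_apply, ContinuousLinearMap.sum_apply]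
          congr 1
          refine Finset.sum_congr rfl fun k _ => ?_
          rw [ContinuousLinearMap.mul_apply, hRdef, hLdef, Rop_pow_apply, Lop_pow_apply,
            mul_assoc]
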